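/- The Euler adic transformation T : X \ X_max → X \ X_min is a bijection, and the symmetric measure η is T-invariant: for every Borel set B ⊆ X, η({x ∈ X \ X_max : T(x) ∈ B}) = η(B). -/

import Mathlib

open MeasureTheory Filter
open scoped ENNReal

/-- The Euler path space: a point is an infinite edge path in the Euler graph,
`x n : Fin (n+2)` being the label of the edge chosen from level `n` to level `n+1`. -/
abbrev EulerPath : Type := ∀ n : ℕ, Fin (n + 2)

/-- Vertex labels: `kv x n` is the `k` with the path `x` passing through vertex `(n,k)`.
A label `(x n : ℕ) ≤ kv x n` is a left turn (edge to `(n+1, kv x n)`), a larger label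
is a right turn (edge to `(n+1, kv x n + 1)`). -/
def kv (x : EulerPath) : ℕ → ℕ
  | 0 => 0
  | n + 1 => if (x n : ℕ) ≤ kv x n then kv x n else kv x n + 1

/-- The symmetric measure: the product over `n` of the uniform probability measures on
`Fin (n+2)`, characterized as the probability measure giving each cylinder of length `n`
the measure `∏_{i<n} 1/(i+2)`. -/
def IsSymmetricMeasure (η : Measure EulerPath) : Prop :=
  IsProbabilityMeasure η ∧
    ∀ (n : ℕ) (c : EulerPath),
      η {x | ∀ i < n, x i = c i} = ∏ i ∈ Finset.range n, ((i : ℝ≥0∞) + 2)⁻¹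

/-- The strict partial order on paths: `x` is less than `y` if they eventually agree,
pass through the same vertex just after the last disagreement, and at the last
disagreement the edge of `x` strictly precedes the edge of `y` in the order on edges
into that common vertex: the right edges (those from the source with the smaller
vertex label) come before the left edges, and edges with the same source are ordered
by their outgoing labels. -/
def pathLT (x y : EulerPath) : Prop :=
  ∃ N, (∀ n, N < n → x n = y n) ∧ kv x (N + 1) = kv y (N + 1) ∧
    (kv x N < kv y N ∨ (kv x N = kv y N ∧ (x N : ℕ) < (y N : ℕ)))

/-- The set of maximal paths. -/
def Xmax : Set EulerPath := {x | ¬ ∃ y, pathLT x y}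

/-- The set of minimal paths. -/
def Xmin : Set EulerPath := {x | ¬ ∃ y, pathLT y x}

/-- `x j` is the largest edge into the vertex `(j+1, kv x (j+1))`: either it is the left
edge with the largest label, or it is the unique edge into the vertex `(j+1, j+1)`. -/
def IsMaxEdge (x : EulerPath) (j : ℕ) : Prop :=
  (x j : ℕ) = kv x j ∨ kv x (j + 1) = j + 1

instance (x : EulerPath) (j : ℕ) : Decidable (IsMaxEdge x j) := by
  unfold IsMaxEdge; infer_instance

open scoped Classical

/-- The Euler adic transformation: if `j` is the least index such that `x j` is not the
largest edge into `(j+1, kv x (j+1))`, then `T x` agrees with `x` in coordinates `> j`,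
has as `j`-th edge the next larger edge into `(j+1, kv x (j+1))` (the next right edge if
`x j` is a right edge that is not the last one, the first left edge if `x j` is the last
right edge, and the next left edge if `x j` is a left edge), and its first `j` edges
form the minimal path from the root `(0,0)` to the source vertex `(j, k')` of that edge
(which goes through `(i, max (k' - (j - i)) 0)` at each level `i ≤ j`, always using the
minimal edge). On paths all of whose edges are maximal, `T` is defined as the identity. -/
noncomputable def eulerAdic (x : EulerPath) : EulerPath :=
  if h : ∃ j, ¬ IsMaxEdge x j then
    let j := Nat.find h
    -- the source vertex `(j, k')` of the next larger edge into `(j+1, kv x (j+1))`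
    let k' := if (x j : ℕ) = j + 1 then kv x (j + 1) else kv x j
    fun n =>
      if j < n then x n
      else if hn : n = j then
        -- the next larger edge into `(j+1, kv x (j+1))`
        ⟨if (x j : ℕ) = j + 1 then 0 else (x j : ℕ) + 1, by
          have h2 := (x j).isLt
          split_ifs with h' <;> omega⟩
      else
        -- the minimal path from the root `(0,0)` to the vertex `(j, k')`
        ⟨(if n + 1 ≤ j - k' then 0 else k' + n + 1 - j) % (n + 2),
          Nat.mod_lt _ (by omega)⟩
  else x

/-! ### basic kv lemmas -/

lemma kv_succ (x : EulerPath) (n : ℕ) :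
    kv x (n + 1) = if (x n : ℕ) ≤ kv x n then kv x n else kv x n + 1 := rfl

lemma kv_le (x : EulerPath) : ∀ n, kv x n ≤ n
  | 0 => le_refl 0
  | n + 1 => by
    rw [kv_succ]; have := kv_le x n; split <;> omega

lemma kv_succ_cases (x : EulerPath) (n : ℕ) :
    kv x (n + 1) = kv x n ∨ kv x (n + 1) = kv x n + 1 := by
  rw [kv_succ]; split <;> simp

lemma kv_mono_succ (x : EulerPath) (n : ℕ) : kv x n ≤ kv x (n + 1) := by
  rcases kv_succ_cases x n with h | h <;> omega

lemma kv_congr {x y : EulerPath} : ∀ {n}, (∀ i < n, x i = y i) → kv x n = kv y n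
  | 0, _ => rfl
  | n + 1, h => by
    have ih : kv x n = kv y n := kv_congr (fun i hi => h i (by omega))
    rw [kv_succ, kv_succ, ih, h n (by omega)]

lemma kv_congr_ge {x y : EulerPath} {N : ℕ} (hN : kv x N = kv y N)
    (h : ∀ i, N ≤ i → x i = y i) : ∀ n, N ≤ n → kv x n = kv y n := by
  intro n hn
  induction n with
  | zero => exact (by omega : N = 0) ▸ hN
  | succ n ih =>
    rcases Nat.lt_or_ge N (n + 1) with h1 | h1
    · have hn' : N ≤ n := by omega
      rw [kv_succ, kv_succ, ih hn', h n hn']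
    · have : N = n + 1 := by omega
      exact this ▸ hN

/-- minimality of an edge: `x j` is the least edge into `(j+1, kv x (j+1))`. -/
def IsMinEdge (x : EulerPath) (j : ℕ) : Prop :=
  (x j : ℕ) = kv x j + 1 ∨ kv x (j + 1) = 0

/-- paths whose prefix has the "minimal path to `(m,K)`" form -/
lemma kv_of_minform (y : EulerPath) (m K : ℕ) (hK : K ≤ m)
    (h : ∀ i < m, (y i : ℕ) = if i + 1 ≤ m - K then 0 else K + i + 1 - m) :
    (∀ i ≤ m, kv y i = K - (m - i)) ∧ ∀ i < m, IsMinEdge y i := by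
  have main : ∀ i ≤ m, kv y i = K - (m - i) := by
    intro i hi
    induction i with
    | zero => simp [kv]; omega
    | succ i ih =>
      have hv := ih (by omega)
      have h3 := h i (by omega)
      rw [kv_succ, hv, h3]
      split_ifs with h1 h2 h3' <;> omega
  refine ⟨main, fun i hi => ?_⟩
  have h1 := main i (by omega)
  have h2 := main (i + 1) (by omega)
  have h3 := h i hi
  unfold IsMinEdge
  split_ifs at h3 with hc
  · right; omega
  · left; omega

/-- paths whose prefix has the "maximal path to `(m,K)`" form -/
lemma kv_of_maxform (y : EulerPath) (m K : ℕ) (hK : K ≤ m)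
    (h : ∀ i < m, (y i : ℕ) = min K (i + 1)) :
    (∀ i ≤ m, kv y i = min K i) ∧ ∀ i < m, IsMaxEdge y i := by
  have main : ∀ i ≤ m, kv y i = min K i := by
    intro i hi
    induction i with
    | zero => simp [kv]
    | succ i ih =>
      have hv := ih (by omega)
      have h3 := h i (by omega)
      rw [kv_succ, hv, h3]
      split_ifs with h1 <;> omega
  refine ⟨main, fun i hi => ?_⟩
  have h1 := main i (by omega)
  have h2 := main (i + 1) (by omega)
  have h3 := h i hi
  unfold IsMaxEdge
  rcases Nat.lt_or_ge i K with hc | hc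
  · right; omega
  · left; omega

lemma maxPrefix (x : EulerPath) (m : ℕ) (h : ∀ i < m, IsMaxEdge x i) :
    (∀ i ≤ m, kv x i = min (kv x m) i) ∧ ∀ i < m, (x i : ℕ) = min (kv x m) (i + 1) := by
  induction m with
  | zero => exact ⟨fun i hi => by interval_cases i; simp [kv], fun i hi => by omega⟩
  | succ m ih =>
    obtain ⟨ihk, ihx⟩ := ih (fun i hi => h i (by omega))
    have hkm := kv_le x m
    have hkm1 := kv_le x (m + 1)
    have hmono := kv_mono_succ x m
    rcases h m (by omega) with hA | hB
    · -- left-max edge at m : kv x (m+1) = kv x m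
      have heq : kv x (m + 1) = kv x m := by rw [kv_succ, if_pos (by omega)]
      constructor
      · intro i hi
        rcases Nat.lt_or_ge i (m + 1) with h1 | h1
        · have := ihk i (by omega); omega
        · have : i = m + 1 := by omega
          subst this; omega
      · intro i hi
        rcases Nat.lt_or_ge i m with h1 | h1
        · have := ihx i h1; omega
        · have : i = m := by omega
          subst this; omega
    · -- forced right edge: kv x (m+1) = m+1
      have hkvm : kv x m = m := by
        rcases kv_succ_cases x m with h1 | h1 <;> omega
      have hxm : (x m : ℕ) = m + 1 := by
        have h2 := (x m).isLt
        have : ¬ ((x m : ℕ) ≤ kv x m) := by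
          intro hle; rw [kv_succ, if_pos hle] at hB; omega
        omega
      constructor
      · intro i hi
        rcases Nat.lt_or_ge i (m + 1) with h1 | h1
        · have := ihk i (by omega); omega
        · have : i = m + 1 := by omega
          subst this; omega
      · intro i hi
        rcases Nat.lt_or_ge i m with h1 | h1
        · have := ihx i h1; omega
        · have : i = m := by omega
          subst this; omega

lemma minPrefix (x : EulerPath) (m : ℕ) (h : ∀ i < m, IsMinEdge x i) :
    (∀ i ≤ m, kv x i = kv x m - (m - i)) ∧
      ∀ i < m, (x i : ℕ) = if i + 1 ≤ m - kv x m then 0 else kv x m + i + 1 - m := by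
  induction m with
  | zero => exact ⟨fun i hi => by interval_cases i; simp, fun i hi => by omega⟩
  | succ m ih =>
    obtain ⟨ihk, ihx⟩ := ih (fun i hi => h i (by omega))
    have hkm := kv_le x m
    have hkm1 := kv_le x (m + 1)
    have hmono := kv_mono_succ x m
    rcases h m (by omega) with hA | hB
    · -- right-min edge at m: x m = kv x m + 1, kv x (m+1) = kv x m + 1
      have heq : kv x (m + 1) = kv x m + 1 := by rw [kv_succ, if_neg (by omega)]
      constructor
      · intro i hi
        rcases Nat.lt_or_ge i (m + 1) with h1 | h1
        · have := ihk i (by omega); omega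
        · have : i = m + 1 := by omega
          subst this; omega
      · intro i hi
        rcases Nat.lt_or_ge i m with h1 | h1
        · have h4 := ihx i h1; split_ifs at h4 ⊢ <;> omega
        · have : i = m := by omega
          subst this; split_ifs <;> omega
    · -- kv x (m+1) = 0 : x m = 0, kv x m = 0
      have hkv0 : kv x m = 0 := by omega
      have hxm : (x m : ℕ) = 0 := by
        by_contra hc
        rw [kv_succ] at hB
        split at hB <;> omega
      constructor
      · intro i hi
        rcases Nat.lt_or_ge i (m + 1) with h1 | h1
        · have h4 := ihk i (by omega); omega
        · have : i = m + 1 := by omega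
          subst this; omega
      · intro i hi
        rcases Nat.lt_or_ge i m with h1 | h1
        · have h4 := ihx i h1; split_ifs at h4 ⊢ <;> omega
        · have : i = m := by omega
          subst this; split_ifs <;> omega

/-! ### coordinates of eulerAdic -/

def nextK (x : EulerPath) (j : ℕ) : ℕ :=
  if (x j : ℕ) = j + 1 then kv x (j + 1) else kv x j

lemma notMax_iff {x : EulerPath} {j : ℕ} :
    ¬ IsMaxEdge x j ↔ (x j : ℕ) ≠ kv x j ∧ kv x (j + 1) ≠ j + 1 := by
  unfold IsMaxEdge; tauto

lemma nextK_le {x : EulerPath} {j : ℕ} (h : ¬ IsMaxEdge x j) : nextK x j ≤ j := by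
  rw [notMax_iff] at h
  have h1 := kv_le x (j + 1)
  have h2 := kv_le x j
  unfold nextK; split_ifs <;> omega

lemma T_gt {x : EulerPath} (hx : ∃ j, ¬ IsMaxEdge x j) {n : ℕ}
    (h : Nat.find hx < n) : eulerAdic x n = x n := by
  simp only [eulerAdic, dif_pos hx]
  rw [if_pos h]

lemma T_at {x : EulerPath} (hx : ∃ j, ¬ IsMaxEdge x j) :
    (eulerAdic x (Nat.find hx) : ℕ) =
      if (x (Nat.find hx) : ℕ) = Nat.find hx + 1 then 0
      else (x (Nat.find hx) : ℕ) + 1 := by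
  simp only [eulerAdic, dif_pos hx]
  rw [if_neg (lt_irrefl _)]
  simp

lemma T_lt {x : EulerPath} (hx : ∃ j, ¬ IsMaxEdge x j) {n : ℕ}
    (h : n < Nat.find hx) :
    (eulerAdic x n : ℕ) =
      if n + 1 ≤ Nat.find hx - nextK x (Nat.find hx) then 0
      else nextK x (Nat.find hx) + n + 1 - Nat.find hx := by
  have hK := nextK_le (Nat.find_spec hx)
  have hsp := Nat.find_spec hx
  rw [notMax_iff] at hsp
  have h1 := kv_le x (Nat.find hx + 1)
  have h2 := kv_le x (Nat.find hx)
  simp only [eulerAdic, dif_pos hx]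
  rw [if_neg (by omega), dif_neg (by omega)]
  simp only [nextK]
  exact Nat.mod_eq_of_lt (by split_ifs <;> omega)

lemma T_spec {x : EulerPath} (hx : ∃ j, ¬ IsMaxEdge x j) :
    (∀ i ≤ Nat.find hx, kv (eulerAdic x) i = nextK x (Nat.find hx) - (Nat.find hx - i)) ∧
    kv (eulerAdic x) (Nat.find hx + 1) = kv x (Nat.find hx + 1) ∧
    (∀ n, Nat.find hx < n → kv (eulerAdic x) n = kv x n) ∧
    (∀ i < Nat.find hx, IsMinEdge (eulerAdic x) i) ∧
    ¬ IsMinEdge (eulerAdic x) (Nat.find hx) := by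
  set j := Nat.find hx with hj
  set y := eulerAdic x with hy
  have hnm : ¬ IsMaxEdge x j := Nat.find_spec hx
  rw [notMax_iff] at hnm
  obtain ⟨hne, hfull⟩ := hnm
  have hK : nextK x j ≤ j := nextK_le (Nat.find_spec hx)
  have hform : ∀ i < j, (y i : ℕ) =
      if i + 1 ≤ j - nextK x j then 0 else nextK x j + i + 1 - j :=
    fun i hi => T_lt hx hi
  obtain ⟨hkv, hmin⟩ := kv_of_minform y j (nextK x j) hK hform
  have hkvj : kv y j = nextK x j := by have := hkv j le_rfl; omega
  have hyj := T_at hx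
  rw [← hj, ← hy] at hyj
  have h1 := kv_succ x j
  have h2 := kv_succ y j
  have hxlt := (x j).isLt
  have hxle := kv_le x j
  have hkvj1 : kv y (j + 1) = kv x (j + 1) := by
    unfold nextK at hkvj
    split_ifs at hyj hkvj h1 h2 <;> omega
  refine ⟨hkv, hkvj1, ?_, hmin, ?_⟩
  · intro n hn
    exact kv_congr_ge hkvj1 (fun i hi => T_gt hx (by omega)) n (by omega)
  · unfold IsMinEdge
    rw [hkvj1]
    unfold nextK at hkvj
    push_neg
    constructor
    · split_ifs at hyj hkvj h1 <;> omega
    · split_ifs at hyj hkvj h1 <;> omega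

/-! ### the inverse transformation -/

def prevK (y : EulerPath) (j : ℕ) : ℕ :=
  if (y j : ℕ) = 0 then kv y (j + 1) - 1 else kv y j

noncomputable def eulerAdicInv (y : EulerPath) : EulerPath :=
  if h : ∃ j, ¬ IsMinEdge y j then
    let j := Nat.find h
    let k' := prevK y j
    fun n =>
      if j < n then y n
      else if n = j then
        ⟨(if (y j : ℕ) = 0 then j + 1 else (y j : ℕ) - 1) % (n + 2),
          Nat.mod_lt _ (by omega)⟩
      else
        ⟨min k' (n + 1) % (n + 2), Nat.mod_lt _ (by omega)⟩
  else y

lemma notMin_iff {y : EulerPath} {j : ℕ} :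
    ¬ IsMinEdge y j ↔ (y j : ℕ) ≠ kv y j + 1 ∧ kv y (j + 1) ≠ 0 := by
  unfold IsMinEdge; tauto

lemma notMin_kv_succ_le {y : EulerPath} {j : ℕ} (h : ¬ IsMinEdge y j) :
    kv y (j + 1) ≤ j ∧ 1 ≤ kv y (j + 1) := by
  rw [notMin_iff] at h
  have h1 := kv_le y (j + 1)
  have h2 := kv_le y j
  have h3 := kv_succ y j
  have h4 := (y j).isLt
  constructor
  · -- if kv y (j+1) = j+1 then forced min edge
    by_contra hc
    have hj1 : kv y (j + 1) = j + 1 := by omega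
    split_ifs at h3 <;> omega
  · omega

lemma prevK_le {y : EulerPath} {j : ℕ} (h : ¬ IsMinEdge y j) : prevK y j ≤ j := by
  have h1 := notMin_kv_succ_le h
  have h2 := kv_le y j
  unfold prevK; split_ifs <;> omega

lemma Tinv_gt {y : EulerPath} (hy : ∃ j, ¬ IsMinEdge y j) {n : ℕ}
    (h : Nat.find hy < n) : eulerAdicInv y n = y n := by
  simp only [eulerAdicInv, dif_pos hy]
  rw [if_pos h]

lemma Tinv_at {y : EulerPath} (hy : ∃ j, ¬ IsMinEdge y j) :
    (eulerAdicInv y (Nat.find hy) : ℕ) =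
      if (y (Nat.find hy) : ℕ) = 0 then Nat.find hy + 1
      else (y (Nat.find hy) : ℕ) - 1 := by
  have h4 := (y (Nat.find hy)).isLt
  simp only [eulerAdicInv, dif_pos hy]
  rw [if_neg (lt_irrefl _), if_pos trivial]
  exact Nat.mod_eq_of_lt (by split_ifs <;> omega)

lemma Tinv_lt {y : EulerPath} (hy : ∃ j, ¬ IsMinEdge y j) {n : ℕ}
    (h : n < Nat.find hy) :
    (eulerAdicInv y n : ℕ) = min (prevK y (Nat.find hy)) (n + 1) := by
  simp only [eulerAdicInv, dif_pos hy]
  rw [if_neg (by omega), if_neg (by omega)]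
  exact Nat.mod_eq_of_lt (by omega)

lemma Tinv_spec {y : EulerPath} (hy : ∃ j, ¬ IsMinEdge y j) :
    (∀ i ≤ Nat.find hy, kv (eulerAdicInv y) i = min (prevK y (Nat.find hy)) i) ∧
    kv (eulerAdicInv y) (Nat.find hy + 1) = kv y (Nat.find hy + 1) ∧
    (∀ n, Nat.find hy < n → kv (eulerAdicInv y) n = kv y n) ∧
    (∀ i < Nat.find hy, IsMaxEdge (eulerAdicInv y) i) ∧
    ¬ IsMaxEdge (eulerAdicInv y) (Nat.find hy) := by
  set j := Nat.find hy with hj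
  set x := eulerAdicInv y with hxdef
  have hnm : ¬ IsMinEdge y j := Nat.find_spec hy
  have hnm' := hnm
  rw [notMin_iff] at hnm'
  obtain ⟨hne, hpos⟩ := hnm'
  have hKs := notMin_kv_succ_le hnm
  have hK : prevK y j ≤ j := prevK_le hnm
  have hform : ∀ i < j, (x i : ℕ) = min (prevK y j) (i + 1) :=
    fun i hi => Tinv_lt hy hi
  obtain ⟨hkv, hmax⟩ := kv_of_maxform x j (prevK y j) hK hform
  have hkvj : kv x j = prevK y j := by have := hkv j le_rfl; omega
  have hxj := Tinv_at hy
  rw [← hj, ← hxdef] at hxj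
  have h1 := kv_succ y j
  have h2 := kv_succ x j
  have hylt := (y j).isLt
  have hyle := kv_le y j
  have hkvj1 : kv x (j + 1) = kv y (j + 1) := by
    unfold prevK at hkvj
    split_ifs at hxj hkvj h1 h2 <;> omega
  refine ⟨hkv, hkvj1, ?_, hmax, ?_⟩
  · intro n hn
    exact kv_congr_ge hkvj1 (fun i hi => Tinv_gt hy (by omega)) n (by omega)
  · rw [notMax_iff, hkvj1]
    unfold prevK at hkvj
    constructor
    · split_ifs at hxj hkvj h1 <;> omega
    · omega

/-! ### the two identities -/

lemma T_notXmin {x : EulerPath} (hx : ∃ j, ¬ IsMaxEdge x j) :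
    ∃ hy : (∃ j, ¬ IsMinEdge (eulerAdic x) j), Nat.find hy = Nat.find hx := by
  obtain ⟨hkv, hkvj1, hgt, hmin, hnotmin⟩ := T_spec hx
  have hy : ∃ j, ¬ IsMinEdge (eulerAdic x) j := ⟨Nat.find hx, hnotmin⟩
  refine ⟨hy, ?_⟩
  rw [Nat.find_eq_iff]
  exact ⟨hnotmin, fun i hi => not_not_intro (hmin i hi)⟩

lemma Tinv_notXmax {y : EulerPath} (hy : ∃ j, ¬ IsMinEdge y j) :
    ∃ hx : (∃ j, ¬ IsMaxEdge (eulerAdicInv y) j), Nat.find hx = Nat.find hy := by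
  obtain ⟨hkv, hkvj1, hgt, hmax, hnotmax⟩ := Tinv_spec hy
  have hx : ∃ j, ¬ IsMaxEdge (eulerAdicInv y) j := ⟨Nat.find hy, hnotmax⟩
  refine ⟨hx, ?_⟩
  rw [Nat.find_eq_iff]
  exact ⟨hnotmax, fun i hi => not_not_intro (hmax i hi)⟩

lemma Tinv_T {x : EulerPath} (hx : ∃ j, ¬ IsMaxEdge x j) :
    eulerAdicInv (eulerAdic x) = x := by
  obtain ⟨hy, hfind⟩ := T_notXmin hx
  obtain ⟨hkv, hkvj1, hgt, hmin, hnotmin⟩ := T_spec hx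
  have hxmax : ∀ i < Nat.find hx, IsMaxEdge x i :=
    fun i hi => not_not.mp (Nat.find_min hx hi)
  obtain ⟨hmk, hmx⟩ := maxPrefix x (Nat.find hx) hxmax
  have hsp := Nat.find_spec hx
  rw [notMax_iff] at hsp
  have hyj := T_at hx
  have hkvy : kv (eulerAdic x) (Nat.find hx) = nextK x (Nat.find hx) := by
    have := hkv (Nat.find hx) le_rfl; omega
  have hxkv := kv_succ x (Nat.find hx)
  have hxle := kv_le x (Nat.find hx)
  have hxlt := (x (Nat.find hx)).isLt
  have hprev : prevK (eulerAdic x) (Nat.find hx) = kv x (Nat.find hx) := by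
    unfold prevK nextK at *
    split_ifs at hyj hkvy hxkv ⊢ <;> omega
  funext n
  rcases lt_trichotomy (Nat.find hx) n with h | h | h
  · rw [Tinv_gt hy (hfind ▸ h), T_gt hx h]
  · subst h
    apply Fin.ext
    have h1 := Tinv_at hy
    rw [hfind] at h1
    rw [h1]
    unfold nextK at *
    split_ifs at hyj ⊢ <;> omega
  · apply Fin.ext
    have h1 := Tinv_lt hy (n := n) (by omega)
    rw [hfind] at h1
    rw [h1, hprev]
    have := hmx n h
    omega

lemma T_Tinv {y : EulerPath} (hy : ∃ j, ¬ IsMinEdge y j) :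
    eulerAdic (eulerAdicInv y) = y := by
  obtain ⟨hx, hfind⟩ := Tinv_notXmax hy
  obtain ⟨hkv, hkvj1, hgt, hmax, hnotmax⟩ := Tinv_spec hy
  have hymin : ∀ i < Nat.find hy, IsMinEdge y i :=
    fun i hi => not_not.mp (Nat.find_min hy hi)
  obtain ⟨hmk, hmy⟩ := minPrefix y (Nat.find hy) hymin
  have hsp := Nat.find_spec hy
  rw [notMin_iff] at hsp
  have hKs := notMin_kv_succ_le (Nat.find_spec hy)
  have hxj := Tinv_at hy
  have hkvx : kv (eulerAdicInv y) (Nat.find hy) = prevK y (Nat.find hy) := by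
    have := hkv (Nat.find hy) le_rfl
    have := prevK_le (Nat.find_spec hy)
    omega
  have hykv := kv_succ y (Nat.find hy)
  have hyle := kv_le y (Nat.find hy)
  have hylt := (y (Nat.find hy)).isLt
  have hnext : nextK (eulerAdicInv y) (Nat.find hy) = kv y (Nat.find hy) := by
    unfold prevK nextK at *
    split_ifs at hxj hkvx hykv ⊢ <;> omega
  funext n
  rcases lt_trichotomy (Nat.find hy) n with h | h | h
  · rw [T_gt hx (hfind ▸ h), Tinv_gt hy h]
  · subst h
    apply Fin.ext
    have h1 := T_at hx
    rw [hfind] at h1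
    rw [h1]
    split_ifs with h2 h3 <;> split_ifs at hxj <;> omega
  · apply Fin.ext
    have h1 := T_lt hx (n := n) (by omega)
    rw [hfind] at h1
    rw [h1, hnext]
    have h2 := hmy n h
    split_ifs at h2 ⊢ <;> omega

/-! ### characterization of Xmax and Xmin -/

lemma mem_Xmax_iff {x : EulerPath} : x ∈ Xmax ↔ ∀ j, IsMaxEdge x j := by
  constructor
  · intro hx j
    by_contra hj
    apply hx
    have hex : ∃ j, ¬ IsMaxEdge x j := ⟨j, hj⟩
    obtain ⟨hkv, hkvj1, hgt, hmin, hnotmin⟩ := T_spec hex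
    refine ⟨eulerAdic x, Nat.find hex, fun n hn => (T_gt hex hn).symm, hkvj1.symm, ?_⟩
    have hsp := Nat.find_spec hex
    rw [notMax_iff] at hsp
    have hkvy : kv (eulerAdic x) (Nat.find hex) = nextK x (Nat.find hex) := by
      have := hkv (Nat.find hex) le_rfl; omega
    have hyj := T_at hex
    have hxkv := kv_succ x (Nat.find hex)
    have hxle := kv_le x (Nat.find hex)
    unfold nextK at hkvy
    split_ifs at hkvy hyj hxkv <;> [left; left; right; right] <;>
      first
        | omega
        | (constructor <;> omega)
  · intro h hy
    obtain ⟨y, N, hagree, hkv1, horder⟩ := hy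
    have hxN := h N
    have hxkv := kv_succ x N
    have hykv := kv_succ y N
    have hxle := kv_le x N
    have hyle := kv_le y N
    have hymono := kv_mono_succ y N
    have hxlt := (x N).isLt
    have hylt := (y N).isLt
    rcases hxN with hA | hB
    · rcases horder with h1 | ⟨h1, h2⟩ <;> split_ifs at hxkv hykv <;> omega
    · rcases horder with h1 | ⟨h1, h2⟩ <;> split_ifs at hxkv hykv <;> omega

lemma mem_Xmin_iff {y : EulerPath} : y ∈ Xmin ↔ ∀ j, IsMinEdge y j := by
  constructor
  · intro hy j
    by_contra hj
    apply hy
    have hex : ∃ j, ¬ IsMinEdge y j := ⟨j, hj⟩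
    obtain ⟨hkv, hkvj1, hgt, hmax, hnotmax⟩ := Tinv_spec hex
    refine ⟨eulerAdicInv y, Nat.find hex, fun n hn => Tinv_gt hex hn, hkvj1, ?_⟩
    have hsp := Nat.find_spec hex
    rw [notMin_iff] at hsp
    have hKs := notMin_kv_succ_le (Nat.find_spec hex)
    have hkvx : kv (eulerAdicInv y) (Nat.find hex) = prevK y (Nat.find hex) := by
      have := hkv (Nat.find hex) le_rfl
      have := prevK_le (Nat.find_spec hex)
      omega
    have hxj := Tinv_at hex
    have hykv := kv_succ y (Nat.find hex)
    have hyle := kv_le y (Nat.find hex)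
    unfold prevK at hkvx
    split_ifs at hkvx hxj hykv <;> [left; left; right; right] <;>
      first
        | omega
        | (constructor <;> omega)
  · intro h hx
    obtain ⟨x, N, hagree, hkv1, horder⟩ := hx
    have hyN := h N
    have hxkv := kv_succ x N
    have hykv := kv_succ y N
    have hxle := kv_le x N
    have hyle := kv_le y N
    have hxmono := kv_mono_succ x N
    have hxlt := (x N).isLt
    have hylt := (y N).isLt
    rcases hyN with hA | hB
    · rcases horder with h1 | ⟨h1, h2⟩ <;> split_ifs at hxkv hykv <;> omega
    · rcases horder with h1 | ⟨h1, h2⟩ <;> split_ifs at hxkv hykv <;> omega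

lemma not_mem_Xmax_iff {x : EulerPath} : x ∉ Xmax ↔ ∃ j, ¬ IsMaxEdge x j := by
  rw [mem_Xmax_iff]; push_neg; rfl

lemma not_mem_Xmin_iff {y : EulerPath} : y ∉ Xmin ↔ ∃ j, ¬ IsMinEdge y j := by
  rw [mem_Xmin_iff]; push_neg; rfl

lemma T_mapsTo : Set.MapsTo eulerAdic Xmaxᶜ Xminᶜ := by
  intro x hx
  rw [Set.mem_compl_iff, not_mem_Xmax_iff] at hx
  rw [Set.mem_compl_iff, not_mem_Xmin_iff]
  exact ⟨Nat.find hx, (T_spec hx).2.2.2.2⟩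

lemma Tinv_mapsTo : Set.MapsTo eulerAdicInv Xminᶜ Xmaxᶜ := by
  intro y hy
  rw [Set.mem_compl_iff, not_mem_Xmin_iff] at hy
  rw [Set.mem_compl_iff, not_mem_Xmax_iff]
  exact ⟨Nat.find hy, (Tinv_spec hy).2.2.2.2⟩

lemma T_bijOn : Set.BijOn eulerAdic Xmaxᶜ Xminᶜ := by
  apply Set.InvOn.bijOn (f' := eulerAdicInv) _ T_mapsTo Tinv_mapsTo
  constructor
  · intro x hx
    rw [Set.mem_compl_iff, not_mem_Xmax_iff] at hx
    exact Tinv_T hx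
  · intro y hy
    rw [Set.mem_compl_iff, not_mem_Xmin_iff] at hy
    exact T_Tinv hy

/-! ### word spaces, cylinders, measurability -/

abbrev Wd (m : ℕ) := ∀ i : Fin m, Fin (i.1 + 2)

def resW (m : ℕ) (x : EulerPath) : Wd m := fun i => x i.1

def extW (m : ℕ) (w : Wd m) : EulerPath :=
  fun i => if h : i < m then w ⟨i, h⟩ else ⟨0, by omega⟩

lemma resW_extW (m : ℕ) (w : Wd m) : resW m (extW m w) = w := by
  funext i
  simp only [resW, extW, dif_pos i.isLt]

lemma extW_resW_agree (m : ℕ) (x : EulerPath) : ∀ i < m, extW m (resW m x) i = x i := by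
  intro i hi
  simp only [resW, extW, dif_pos hi]

lemma resW_eq_iff {m : ℕ} {x : EulerPath} {w : Wd m} :
    resW m x = w ↔ ∀ i < m, x i = extW m w i := by
  constructor
  · intro h i hi
    rw [← h]
    exact (extW_resW_agree m x i hi).symm
  · intro h
    funext i
    rw [resW, h i.1 i.isLt, extW, dif_pos i.isLt]

lemma measurable_resW (m : ℕ) : Measurable (resW m) :=
  measurable_pi_lambda _ fun i => measurable_pi_apply _

lemma measurable_depOn {β : Type*} [MeasurableSpace β] (m : ℕ) (g : EulerPath → β)
    (hg : ∀ x y : EulerPath, (∀ i < m, x i = y i) → g x = g y) : Measurable g := by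
  have hfac : g = (fun w => g (extW m w)) ∘ resW m := by
    funext x
    exact hg _ _ fun i hi => (extW_resW_agree m x i hi).symm
  rw [hfac]
  exact Measurable.of_discrete.comp (measurable_resW m)

lemma measurableSet_depOn (m : ℕ) (S : Set EulerPath)
    (hS : ∀ x y : EulerPath, (∀ i < m, x i = y i) → (x ∈ S ↔ y ∈ S)) :
    MeasurableSet S := by
  have : S = resW m ⁻¹' {w | extW m w ∈ S} := by
    ext x
    simp only [Set.mem_preimage, Set.mem_setOf_eq]
    exact hS x (extW m (resW m x)) (fun i hi => (extW_resW_agree m x i hi).symm)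
  rw [this]
  exact measurable_resW m MeasurableSet.of_discrete

def cyl (n : ℕ) (c : EulerPath) : Set EulerPath := {x | ∀ i < n, x i = c i}

lemma measurableSet_cyl (n : ℕ) (c : EulerPath) : MeasurableSet (cyl n c) :=
  measurableSet_depOn n _ (by
    intro x y h
    unfold cyl
    constructor <;> intro hx i hi <;> [rw [← h i hi]; rw [h i hi]] <;> exact hx i hi)

lemma cyl_eq_preimage (m : ℕ) (w : Wd m) : cyl m (extW m w) = resW m ⁻¹' {w} := by
  ext x
  simp only [Set.mem_preimage, Set.mem_singleton_iff, resW_eq_iff, cyl, Set.mem_setOf_eq]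

/-! congruence lemmas for edges -/

lemma isMaxEdge_congr {x y : EulerPath} {j : ℕ} (h : ∀ i < j + 1, x i = y i) :
    IsMaxEdge x j ↔ IsMaxEdge y j := by
  unfold IsMaxEdge
  rw [kv_congr (fun i hi => h i (by omega)),
    kv_congr (n := j + 1) (fun i hi => h i hi), h j (by omega)]

lemma isMinEdge_congr {x y : EulerPath} {j : ℕ} (h : ∀ i < j + 1, x i = y i) :
    IsMinEdge x j ↔ IsMinEdge y j := by
  unfold IsMinEdge
  rw [kv_congr (fun i hi => h i (by omega)),
    kv_congr (n := j + 1) (fun i hi => h i hi), h j (by omega)]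

lemma nextK_congr {x y : EulerPath} {j : ℕ} (h : ∀ i < j + 1, x i = y i) :
    nextK x j = nextK y j := by
  unfold nextK
  rw [kv_congr (n := j) (fun i hi => h i (by omega)),
    kv_congr (n := j + 1) (fun i hi => h i hi), h j (by omega)]

/-! ### measurability of eulerAdic -/

def bdyV (j n : ℕ) (x : EulerPath) : ℕ :=
  if j < n then (x n : ℕ)
  else if n = j then (if (x j : ℕ) = j + 1 then 0 else (x j : ℕ) + 1)
  else (if n + 1 ≤ j - nextK x j then 0 else nextK x j + n + 1 - j)

lemma bdyV_congr {j n : ℕ} {x y : EulerPath} (h : ∀ i < max (j + 1) (n + 1), x i = y i) :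
    bdyV j n x = bdyV j n y := by
  have h1 : ∀ i < j + 1, x i = y i := fun i hi => h i (by omega)
  unfold bdyV
  rw [nextK_congr h1, h1 j (by omega)]
  split_ifs with h2 <;> try rfl
  rw [h n (by omega)]

lemma T_val_eq {x : EulerPath} (hx : ∃ j, ¬ IsMaxEdge x j) (n : ℕ) :
    (eulerAdic x n : ℕ) = bdyV (Nat.find hx) n x := by
  unfold bdyV
  rcases lt_trichotomy (Nat.find hx) n with h | h | h
  · rw [if_pos h, T_gt hx h]
  · subst h
    rw [if_neg (lt_irrefl _), if_pos rfl, T_at hx]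
  · rw [if_neg (by omega), if_neg (by omega), T_lt hx h]

def Dset (j : ℕ) : Set EulerPath := {x | (∀ i < j, IsMaxEdge x i) ∧ ¬ IsMaxEdge x j}

lemma measurableSet_isMaxEdge (j : ℕ) : MeasurableSet {x : EulerPath | IsMaxEdge x j} :=
  measurableSet_depOn (j + 1) _ (fun x y h => isMaxEdge_congr h)

lemma measurableSet_isMinEdge (j : ℕ) : MeasurableSet {x : EulerPath | IsMinEdge x j} :=
  measurableSet_depOn (j + 1) _ (fun x y h => isMinEdge_congr h)

lemma measurableSet_Dset (j : ℕ) : MeasurableSet (Dset j) :=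
  measurableSet_depOn (j + 1) _ (by
    intro x y h
    unfold Dset
    simp only [Set.mem_setOf_eq]
    constructor <;> intro ⟨h1, h2⟩ <;> constructor
    · intro i hi
      exact (isMaxEdge_congr (fun l hl => h l (by omega))).mp (h1 i hi)
    · exact fun hc => h2 ((isMaxEdge_congr h).mpr hc)
    · intro i hi
      exact (isMaxEdge_congr (fun l hl => h l (by omega))).mpr (h1 i hi)
    · exact fun hc => h2 ((isMaxEdge_congr h).mp hc))

lemma mem_Dset_iff_find {x : EulerPath} {j : ℕ} :
    x ∈ Dset j ↔ ∃ h : (∃ i, ¬ IsMaxEdge x i), Nat.find h = j := by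
  constructor
  · rintro ⟨h1, h2⟩
    refine ⟨⟨j, h2⟩, ?_⟩
    rw [Nat.find_eq_iff]
    exact ⟨h2, fun i hi => not_not_intro (h1 i hi)⟩
  · rintro ⟨h, rfl⟩
    exact ⟨fun i hi => not_not.mp (Nat.find_min h hi), Nat.find_spec h⟩

lemma measurable_eulerAdic : Measurable eulerAdic := by
  apply measurable_pi_lambda
  intro n
  apply measurable_to_countable'
  intro a
  have hset : (fun x => eulerAdic x n) ⁻¹' {a} =
      ({x | ∀ j, IsMaxEdge x j} ∩ {x | x n = a}) ∪
        ⋃ j, (Dset j ∩ {x | bdyV j n x = (a : ℕ)}) := by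
    ext x
    simp only [Set.mem_preimage, Set.mem_singleton_iff, Set.mem_union, Set.mem_inter_iff,
      Set.mem_setOf_eq, Set.mem_iUnion]
    by_cases hex : ∃ j, ¬ IsMaxEdge x j
    · constructor
      · intro hval
        refine Or.inr ⟨Nat.find hex, mem_Dset_iff_find.mpr ⟨hex, rfl⟩, ?_⟩
        rw [← T_val_eq hex n, hval]
      · rintro (⟨hall, _⟩ | ⟨j, hD, hb⟩)
        · exact absurd hex (by push_neg; exact hall)
        · obtain ⟨hex', hfind⟩ := mem_Dset_iff_find.mp hD
          apply Fin.ext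
          rw [T_val_eq hex' n, hfind, hb]
    · have hTx : eulerAdic x = x := by rw [eulerAdic, dif_neg hex]
      push_neg at hex
      constructor
      · intro hval
        exact Or.inl ⟨hex, by rw [← hTx]; exact hval⟩
      · rintro (⟨_, hxa⟩ | ⟨j, hD, _⟩)
        · rw [hTx]; exact hxa
        · exact absurd hD.2 (not_not_intro (hex j))
  rw [hset]
  apply MeasurableSet.union
  · have hrw : {x : EulerPath | ∀ j, IsMaxEdge x j} = ⋂ j, {x : EulerPath | IsMaxEdge x j} := by
      ext z; simp [Set.mem_iInter]
    rw [hrw]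
    exact (MeasurableSet.iInter (fun j => measurableSet_isMaxEdge j)).inter
      (measurableSet_depOn (n + 1) {x : EulerPath | x n = a} (by
        intro x y h
        rw [Set.mem_setOf_eq, Set.mem_setOf_eq, h n (by omega)]))
  · apply MeasurableSet.iUnion
    intro j
    exact (measurableSet_Dset j).inter
      (measurableSet_depOn (max (j + 1) (n + 1)) {x : EulerPath | bdyV j n x = (a : ℕ)} (by
        intro x y h
        rw [Set.mem_setOf_eq, Set.mem_setOf_eq, bdyV_congr h]))

/-! ### T only depends on the first m coordinates on good sets -/

lemma find_congr {x y : EulerPath} {m : ℕ} (hagree : ∀ i < m, x i = y i)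
    (hx : ∃ j, ¬ IsMaxEdge x j) (hxm : Nat.find hx < m) :
    ∃ hy : (∃ j, ¬ IsMaxEdge y j), Nat.find hy = Nat.find hx ∧ Nat.find hy < m := by
  have hy : ∃ j, ¬ IsMaxEdge y j :=
    ⟨Nat.find hx, fun hc => (Nat.find_spec hx)
      ((isMaxEdge_congr (fun i hi => hagree i (by omega))).mpr hc)⟩
  have hfeq : Nat.find hy = Nat.find hx := by
    rw [Nat.find_eq_iff]
    refine ⟨fun hc => (Nat.find_spec hx)
      ((isMaxEdge_congr (fun i hi => hagree i (by omega))).mpr hc), ?_⟩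
    intro i hi
    rw [not_not]
    exact (isMaxEdge_congr (fun l hl => hagree l (by omega))).mp
      (not_not.mp (Nat.find_min hx hi))
  exact ⟨hy, hfeq, hfeq ▸ hxm⟩

lemma T_congr {x y : EulerPath} {m : ℕ} (hagree : ∀ i < m, x i = y i)
    (hx : ∃ j, ¬ IsMaxEdge x j) (hxm : Nat.find hx < m) :
    ∀ i < m, eulerAdic x i = eulerAdic y i := by
  obtain ⟨hy, hfind, _⟩ := find_congr hagree hx hxm
  intro i hi
  rcases lt_trichotomy (Nat.find hx) i with h | h | h
  · rw [T_gt hx h, T_gt hy (hfind ▸ h)]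
    exact hagree i hi
  · subst h
    apply Fin.ext
    rw [T_at hx]
    have h2 := T_at hy
    rw [hfind] at h2
    rw [h2, hagree (Nat.find hx) hxm]
  · apply Fin.ext
    rw [T_lt hx h]
    have h2 := T_lt hy (n := i) (hfind ▸ h)
    rw [hfind] at h2
    rw [h2, nextK_congr (j := Nat.find hx) (fun l hl => hagree l (by omega))]

/-! ### the cylinder π-system generates the σ-algebra -/

lemma isPiSystem_cyl : IsPiSystem {s : Set EulerPath | ∃ n c, s = cyl n c} := by
  rintro s ⟨n, c, rfl⟩ t ⟨k, d, rfl⟩ hne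
  obtain ⟨z, hz1, hz2⟩ := hne
  rcases le_total n k with h | h
  · refine ⟨k, d, ?_⟩
    ext x
    constructor
    · exact fun hx => hx.2
    · intro hx
      refine ⟨fun i hi => ?_, hx⟩
      rw [hx i (by omega), ← hz2 i (by omega), hz1 i hi]
  · refine ⟨n, c, ?_⟩
    ext x
    constructor
    · exact fun hx => hx.1
    · intro hx
      refine ⟨hx, fun i hi => ?_⟩
      rw [hx i (by omega), ← hz1 i (by omega), hz2 i hi]

lemma measurableSet_eval_gen (i : ℕ) (a : Fin (i + 2)) :
    MeasurableSet[MeasurableSpace.generateFrom {s : Set EulerPath | ∃ n c, s = cyl n c}]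
      ((fun x : EulerPath => x i) ⁻¹' {a}) := by
  have hset : ((fun x : EulerPath => x i) ⁻¹' {a}) =
      ⋃ (w : Wd (i + 1)) (_ : extW (i + 1) w i = a), cyl (i + 1) (extW (i + 1) w) := by
    ext x
    simp only [Set.mem_preimage, Set.mem_singleton_iff, Set.mem_iUnion]
    constructor
    · intro hx
      refine ⟨resW (i + 1) x, ?_, ?_⟩
      · rw [extW_resW_agree (i + 1) x i (by omega)]; exact hx
      · exact fun l hl => (extW_resW_agree (i + 1) x l hl).symm
    · rintro ⟨w, hw, hxw⟩
      rw [hxw i (by omega), hw]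
  rw [hset]
  exact MeasurableSet.iUnion fun w => MeasurableSet.iUnion fun hw =>
    MeasurableSpace.measurableSet_generateFrom ⟨i + 1, extW (i + 1) w, rfl⟩

lemma generateFrom_cyl :
    (inferInstance : MeasurableSpace EulerPath) =
      MeasurableSpace.generateFrom {s : Set EulerPath | ∃ n c, s = cyl n c} := by
  apply le_antisymm
  · apply iSup_le
    intro i
    rw [MeasurableSpace.comap_le_iff_le_map]
    intro t ht
    show MeasurableSet[MeasurableSpace.generateFrom {s : Set EulerPath | ∃ n c, s = cyl n c}]
      ((fun x : EulerPath => x i) ⁻¹' t)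
    have hun : (fun x : EulerPath => x i) ⁻¹' t =
        ⋃ a ∈ t, ((fun x : EulerPath => x i) ⁻¹' {a}) := by
      ext x
      simp
    rw [hun]
    exact MeasurableSet.biUnion (Set.to_countable t) (fun a _ => measurableSet_eval_gen i a)
  · apply MeasurableSpace.generateFrom_le
    rintro t ⟨n, c, rfl⟩
    exact measurableSet_cyl n c

/-! ### measure computations -/

noncomputable def pC (m : ℕ) : ℝ≥0∞ := ∏ i ∈ Finset.range m, ((i : ℝ≥0∞) + 2)⁻¹

def maxPathTo (K : ℕ) : EulerPath :=
  fun i => ⟨min K (i + 1) % (i + 2), Nat.mod_lt _ (by omega)⟩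

def minPathTo (m K : ℕ) : EulerPath :=
  fun i => ⟨(if i + 1 ≤ m - K then 0 else K + i + 1 - m) % (i + 2), Nat.mod_lt _ (by omega)⟩

section Meas

variable {η : Measure EulerPath}
  (hη : ∀ (n : ℕ) (c : EulerPath), η {x | ∀ i < n, x i = c i} = pC n)

include hη

lemma eta_cyl (m : ℕ) (c : EulerPath) : η (cyl m c) = pC m := hη m c

lemma eta_resW_preimage (m : ℕ) (A : Finset (Wd m)) :
    η (resW m ⁻¹' ↑A) = A.card * pC m := by
  have hun : resW m ⁻¹' ↑A = ⋃ w ∈ A, cyl m (extW m w) := by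
    ext x
    simp only [Set.mem_preimage, Set.mem_iUnion, Finset.mem_coe]
    constructor
    · intro hx
      exact ⟨resW m x, hx, by rw [cyl_eq_preimage]; exact rfl⟩
    · rintro ⟨w, hw, hxw⟩
      rw [cyl_eq_preimage] at hxw
      rw [Set.mem_preimage, Set.mem_singleton_iff] at hxw
      rw [hxw]; exact hw
  rw [hun, measure_biUnion_finset]
  · rw [Finset.sum_congr rfl (fun w _ => eta_cyl hη m (extW m w)), Finset.sum_const,
      nsmul_eq_mul]
  · intro w hw w' hw' hne
    rw [Function.onFun, cyl_eq_preimage, cyl_eq_preimage]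
    exact Disjoint.preimage _ (Set.disjoint_singleton.mpr hne)
  · exact fun w _ => measurableSet_cyl _ _

lemma eta_allmax_le (m : ℕ) :
    η {x | ∀ j < m, IsMaxEdge x j} ≤ (m + 1) * pC m := by
  have hsub : {x | ∀ j < m, IsMaxEdge x j} ⊆
      ⋃ K ∈ Finset.range (m + 1), cyl m (maxPathTo K) := by
    intro x hx
    obtain ⟨hk, hxi⟩ := maxPrefix x m hx
    have hkm : kv x m < m + 1 := by have := kv_le x m; omega
    refine Set.mem_biUnion (Finset.mem_range.mpr hkm) ?_
    intro i hi
    apply Fin.ext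
    show (x i : ℕ) = min (kv x m) (i + 1) % (i + 2)
    rw [Nat.mod_eq_of_lt (by omega), hxi i hi]
  calc η {x | ∀ j < m, IsMaxEdge x j}
      ≤ η (⋃ K ∈ Finset.range (m + 1), cyl m (maxPathTo K)) := measure_mono hsub
    _ ≤ ∑ K ∈ Finset.range (m + 1), η (cyl m (maxPathTo K)) :=
        measure_biUnion_finset_le _ _
    _ = (m + 1) * pC m := by
        rw [Finset.sum_congr rfl (fun K _ => eta_cyl hη m (maxPathTo K)),
          Finset.sum_const, nsmul_eq_mul, Finset.card_range]
        norm_num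

lemma eta_allmin_le (m : ℕ) :
    η {x | ∀ j < m, IsMinEdge x j} ≤ (m + 1) * pC m := by
  have hsub : {x | ∀ j < m, IsMinEdge x j} ⊆
      ⋃ K ∈ Finset.range (m + 1), cyl m (minPathTo m K) := by
    intro x hx
    obtain ⟨hk, hxi⟩ := minPrefix x m hx
    have hkm : kv x m < m + 1 := by have := kv_le x m; omega
    refine Set.mem_biUnion (Finset.mem_range.mpr hkm) ?_
    intro i hi
    apply Fin.ext
    show (x i : ℕ) = (if i + 1 ≤ m - kv x m then 0 else kv x m + i + 1 - m) % (i + 2)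
    have hK := kv_le x m
    rw [Nat.mod_eq_of_lt (by split_ifs <;> omega), hxi i hi]
  calc η {x | ∀ j < m, IsMinEdge x j}
      ≤ η (⋃ K ∈ Finset.range (m + 1), cyl m (minPathTo m K)) := measure_mono hsub
    _ ≤ ∑ K ∈ Finset.range (m + 1), η (cyl m (minPathTo m K)) :=
        measure_biUnion_finset_le _ _
    _ = (m + 1) * pC m := by
        rw [Finset.sum_congr rfl (fun K _ => eta_cyl hη m (minPathTo m K)),
          Finset.sum_const, nsmul_eq_mul, Finset.card_range]
        norm_num

end Meas

/-! ### the word-level bijection -/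

def GmaxS (m : ℕ) : Set EulerPath := {x | ∃ j < m, ¬ IsMaxEdge x j}
def GminS (m : ℕ) : Set EulerPath := {x | ∃ j < m, ¬ IsMinEdge x j}

lemma find_lt_of_mem_GmaxS {x : EulerPath} {m : ℕ} (h : x ∈ GmaxS m) :
    ∃ hx : (∃ j, ¬ IsMaxEdge x j), Nat.find hx < m := by
  obtain ⟨j, hj, hmax⟩ := h
  exact ⟨⟨j, hmax⟩, lt_of_le_of_lt (Nat.find_le hmax) hj⟩

lemma find_lt_of_mem_GminS {y : EulerPath} {m : ℕ} (h : y ∈ GminS m) :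
    ∃ hy : (∃ j, ¬ IsMinEdge y j), Nat.find hy < m := by
  obtain ⟨j, hj, hmin⟩ := h
  exact ⟨⟨j, hmin⟩, lt_of_le_of_lt (Nat.find_le hmin) hj⟩

lemma GmaxS_congr {x y : EulerPath} {m : ℕ} (h : ∀ i < m, x i = y i) :
    x ∈ GmaxS m ↔ y ∈ GmaxS m := by
  unfold GmaxS
  constructor <;> rintro ⟨j, hj, hmax⟩ <;> refine ⟨j, hj, ?_⟩
  · exact fun hc => hmax ((isMaxEdge_congr (fun i hi => h i (by omega))).mpr hc)
  · exact fun hc => hmax ((isMaxEdge_congr (fun i hi => h i (by omega))).mp hc)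

lemma GminS_congr {x y : EulerPath} {m : ℕ} (h : ∀ i < m, x i = y i) :
    x ∈ GminS m ↔ y ∈ GminS m := by
  unfold GminS
  constructor <;> rintro ⟨j, hj, hmin⟩ <;> refine ⟨j, hj, ?_⟩
  · exact fun hc => hmin ((isMinEdge_congr (fun i hi => h i (by omega))).mpr hc)
  · exact fun hc => hmin ((isMinEdge_congr (fun i hi => h i (by omega))).mp hc)

lemma cyl_congr {x y : EulerPath} {n m : ℕ} (hnm : n ≤ m) (h : ∀ i < m, x i = y i)
    {c : EulerPath} : x ∈ cyl n c ↔ y ∈ cyl n c := by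
  unfold cyl
  constructor <;> intro hx i hi
  · rw [← h i (by omega)]; exact hx i hi
  · rw [h i (by omega)]; exact hx i hi

noncomputable def AW (m n : ℕ) (c : EulerPath) : Finset (Wd m) :=
  Finset.univ.filter (fun w =>
    extW m w ∈ GmaxS m ∧ eulerAdic (extW m w) ∈ cyl n c)

noncomputable def AW' (m n : ℕ) (c : EulerPath) : Finset (Wd m) :=
  Finset.univ.filter (fun w =>
    extW m w ∈ cyl n c ∧ extW m w ∈ GminS m)

lemma preimage_eq_AW (m n : ℕ) (c : EulerPath) (hn : n ≤ m) :
    eulerAdic ⁻¹' (cyl n c) ∩ GmaxS m = resW m ⁻¹' ↑(AW m n c) := by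
  ext x
  simp only [Set.mem_inter_iff, Set.mem_preimage, AW, Finset.coe_filter,
    Finset.mem_univ, true_and, Set.mem_setOf_eq]
  have hagree : ∀ i < m, extW m (resW m x) i = x i := extW_resW_agree m x
  constructor
  · rintro ⟨hs, hG⟩
    have hG' : extW m (resW m x) ∈ GmaxS m := (GmaxS_congr hagree).mpr hG
    refine ⟨hG', ?_⟩
    obtain ⟨hx, hfind⟩ := find_lt_of_mem_GmaxS hG'
    have hTc := T_congr hagree hx hfind
    exact (cyl_congr hn hTc).mpr hs
  · rintro ⟨hG', hs'⟩
    have hG : x ∈ GmaxS m := (GmaxS_congr hagree).mp hG'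
    obtain ⟨hx', hfind'⟩ := find_lt_of_mem_GmaxS hG'
    have hTc := T_congr hagree hx' hfind'
    exact ⟨(cyl_congr hn hTc).mp hs', hG⟩

lemma cyl_inter_eq_AW' (m n : ℕ) (c : EulerPath) (hn : n ≤ m) :
    cyl n c ∩ GminS m = resW m ⁻¹' ↑(AW' m n c) := by
  ext x
  simp only [Set.mem_inter_iff, Set.mem_preimage, AW', Finset.coe_filter,
    Finset.mem_univ, true_and, Set.mem_setOf_eq]
  have hagree : ∀ i < m, extW m (resW m x) i = x i := extW_resW_agree m x
  rw [cyl_congr hn hagree, GminS_congr hagree]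

lemma extW_default {m : ℕ} (w : Wd m) {i : ℕ} (hi : m ≤ i) :
    (extW m w i : ℕ) = 0 := by
  rw [extW, dif_neg (by omega)]

lemma card_AW_eq (m n : ℕ) (c : EulerPath) (hn : n ≤ m) :
    (AW m n c).card = (AW' m n c).card := by
  apply Finset.card_bij (fun w _ => resW m (eulerAdic (extW m w)))
  · -- maps to AW'
    intro w hw
    rw [AW, Finset.mem_filter] at hw
    obtain ⟨-, hG, hs⟩ := hw
    obtain ⟨hx, hfind⟩ := find_lt_of_mem_GmaxS hG
    have hGmin : eulerAdic (extW m w) ∈ GminS m :=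
      ⟨Nat.find hx, hfind, (T_spec hx).2.2.2.2⟩
    rw [AW', Finset.mem_filter]
    have hagree : ∀ i < m, extW m (resW m (eulerAdic (extW m w))) i =
        eulerAdic (extW m w) i := extW_resW_agree m _
    exact ⟨Finset.mem_univ _, (cyl_congr hn hagree).mpr hs, (GminS_congr hagree).mpr hGmin⟩
  · -- injective
    intro w1 h1 w2 h2 heq
    rw [AW, Finset.mem_filter] at h1 h2
    obtain ⟨-, hG1, -⟩ := h1
    obtain ⟨-, hG2, -⟩ := h2
    obtain ⟨hx1, hfind1⟩ := find_lt_of_mem_GmaxS hG1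
    obtain ⟨hx2, hfind2⟩ := find_lt_of_mem_GmaxS hG2
    have hTeq : eulerAdic (extW m w1) = eulerAdic (extW m w2) := by
      funext i
      rcases Nat.lt_or_ge i m with hi | hi
      · have := congrFun heq ⟨i, hi⟩
        simpa [resW] using this
      · rw [T_gt hx1 (by omega), T_gt hx2 (by omega)]
        apply Fin.ext
        rw [extW_default w1 hi, extW_default w2 hi]
    have hxeq : extW m w1 = extW m w2 := by
      rw [← Tinv_T hx1, ← Tinv_T hx2, hTeq]
    rw [← resW_extW m w1, ← resW_extW m w2, hxeq]
  · -- surjective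
    intro w' hw'
    rw [AW', Finset.mem_filter] at hw'
    obtain ⟨-, hs', hG'⟩ := hw'
    obtain ⟨hy, hfind⟩ := find_lt_of_mem_GminS hG'
    set y := extW m w' with hydef
    set x := eulerAdicInv y with hxdef
    have hTx : eulerAdic x = y := T_Tinv hy
    have hxy : ∀ i, m ≤ i → x i = y i := fun i hi => Tinv_gt hy (by omega)
    have hxw : extW m (resW m x) = x := by
      funext i
      rcases Nat.lt_or_ge i m with hi | hi
      · exact extW_resW_agree m x i hi
      · apply Fin.ext
        rw [extW_default _ hi, hxy i hi, hydef, extW_default w' hi]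
    refine ⟨resW m x, ?_, ?_⟩
    · rw [AW, Finset.mem_filter, hxw]
      refine ⟨Finset.mem_univ _, ⟨Nat.find hy, hfind, (Tinv_spec hy).2.2.2.2⟩, ?_⟩
      rw [hTx]; exact hs'
    · rw [hxw, hTx, hydef, resW_extW]

/-! ### the error term tends to zero -/

noncomputable def epsC (m : ℕ) : ℝ≥0∞ := ((m : ℝ≥0∞) + 1) * pC m

lemma pC_succ (m : ℕ) : pC (m + 1) = pC m * ((m : ℝ≥0∞) + 2)⁻¹ := by
  rw [pC, pC, Finset.prod_range_succ]

lemma epsC_succ (m : ℕ) : epsC (m + 1) = pC m := by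
  have h0 : ((m : ℝ≥0∞) + 2) ≠ 0 := by
    intro hc
    have : (2 : ℝ≥0∞) ≤ (m : ℝ≥0∞) + 2 := le_add_self
    rw [hc] at this
    norm_num at this
  have htop : ((m : ℝ≥0∞) + 2) ≠ ⊤ :=
    ENNReal.add_ne_top.mpr ⟨ENNReal.natCast_ne_top m, by norm_num⟩
  rw [epsC, pC_succ]
  push_cast
  rw [mul_comm (pC m) _, ← mul_assoc]
  rw [show ((m : ℝ≥0∞) + 1 + 1) = (m : ℝ≥0∞) + 2 by ring]
  rw [ENNReal.mul_inv_cancel h0 htop, one_mul]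

lemma pC_le_pow (m : ℕ) : pC m ≤ 2⁻¹ ^ m := by
  calc pC m ≤ ∏ _i ∈ Finset.range m, (2 : ℝ≥0∞)⁻¹ := by
        apply Finset.prod_le_prod'
        intro i _
        apply ENNReal.inv_le_inv'
        exact le_add_self
    _ = 2⁻¹ ^ m := by rw [Finset.prod_const, Finset.card_range]

lemma tendsto_epsC : Tendsto epsC atTop (nhds 0) := by
  rw [← Filter.tendsto_add_atTop_iff_nat 1]
  apply tendsto_of_tendsto_of_tendsto_of_le_of_le (g := fun _ => (0 : ℝ≥0∞))
    (h := fun m => 2⁻¹ ^ m) tendsto_const_nhds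
  · exact ENNReal.tendsto_pow_atTop_nhds_zero_of_lt_one (by
      rw [ENNReal.inv_lt_one]
      norm_num)
  · exact fun m => zero_le
  · exact fun m => (epsC_succ m).le.trans (pC_le_pow m)

/-! ### invariance on cylinders, and the main theorem -/

lemma measurableSet_Xmax : MeasurableSet Xmax := by
  have hrw : Xmax = ⋂ j, {x : EulerPath | IsMaxEdge x j} := by
    ext x
    simp only [Set.mem_iInter, Set.mem_setOf_eq]
    exact mem_Xmax_iff
  rw [hrw]
  exact MeasurableSet.iInter measurableSet_isMaxEdge

section Meas2

variable {η : Measure EulerPath}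
  (hη : ∀ (n : ℕ) (c : EulerPath), η {x | ∀ i < n, x i = c i} = pC n)

include hη

lemma key_inter (m n : ℕ) (c : EulerPath) (hn : n ≤ m) :
    η (eulerAdic ⁻¹' cyl n c ∩ GmaxS m) = η (cyl n c ∩ GminS m) := by
  rw [preimage_eq_AW m n c hn, cyl_inter_eq_AW' m n c hn,
    eta_resW_preimage hη, eta_resW_preimage hη, card_AW_eq m n c hn]

lemma nu_cyl_le (n : ℕ) (c : EulerPath) (m : ℕ) (hn : n ≤ m) :
    η (eulerAdic ⁻¹' cyl n c ∩ Xmaxᶜ) ≤ η (cyl n c) + epsC m := by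
  have hsub : eulerAdic ⁻¹' cyl n c ∩ Xmaxᶜ ⊆
      (eulerAdic ⁻¹' cyl n c ∩ GmaxS m) ∪ {x | ∀ j < m, IsMaxEdge x j} := by
    rintro x ⟨hs, hmax⟩
    by_cases hG : x ∈ GmaxS m
    · exact Or.inl ⟨hs, hG⟩
    · refine Or.inr fun j hj => ?_
      by_contra hc
      exact hG ⟨j, hj, hc⟩
  calc η (eulerAdic ⁻¹' cyl n c ∩ Xmaxᶜ)
      ≤ η ((eulerAdic ⁻¹' cyl n c ∩ GmaxS m) ∪ {x | ∀ j < m, IsMaxEdge x j}) :=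
        measure_mono hsub
    _ ≤ η (eulerAdic ⁻¹' cyl n c ∩ GmaxS m) + η {x | ∀ j < m, IsMaxEdge x j} :=
        measure_union_le _ _
    _ ≤ η (cyl n c) + epsC m := by
        apply add_le_add
        · rw [key_inter hη m n c hn]
          exact measure_mono Set.inter_subset_left
        · exact eta_allmax_le hη m
  
lemma cyl_le_nu (n : ℕ) (c : EulerPath) (m : ℕ) (hn : n ≤ m) :
    η (cyl n c) ≤ η (eulerAdic ⁻¹' cyl n c ∩ Xmaxᶜ) + epsC m := by
  have hsub : cyl n c ⊆ (cyl n c ∩ GminS m) ∪ {x | ∀ j < m, IsMinEdge x j} := by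
    intro x hx
    by_cases hG : x ∈ GminS m
    · exact Or.inl ⟨hx, hG⟩
    · refine Or.inr fun j hj => ?_
      by_contra hc
      exact hG ⟨j, hj, hc⟩
  have hGsub : GmaxS m ⊆ Xmaxᶜ := by
    rintro x ⟨j, _, hc⟩
    rw [Set.mem_compl_iff, not_mem_Xmax_iff]
    exact ⟨j, hc⟩
  calc η (cyl n c)
      ≤ η ((cyl n c ∩ GminS m) ∪ {x | ∀ j < m, IsMinEdge x j}) := measure_mono hsub
    _ ≤ η (cyl n c ∩ GminS m) + η {x | ∀ j < m, IsMinEdge x j} := measure_union_le _ _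
    _ ≤ η (eulerAdic ⁻¹' cyl n c ∩ Xmaxᶜ) + epsC m := by
        apply add_le_add
        · rw [← key_inter hη m n c hn]
          exact measure_mono (Set.inter_subset_inter_right _ hGsub)
        · exact eta_allmin_le hη m

lemma nu_cyl_eq (n : ℕ) (c : EulerPath) :
    η (eulerAdic ⁻¹' cyl n c ∩ Xmaxᶜ) = η (cyl n c) := by
  have htend : ∀ b : ℝ≥0∞, Tendsto (fun m => b + epsC m) atTop (nhds b) := by
    intro b
    have := tendsto_epsC.const_add b
    rwa [add_zero] at this
  apply le_antisymm
  · apply ge_of_tendsto (htend (η (cyl n c)))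
    filter_upwards [eventually_ge_atTop n] with m hm using nu_cyl_le hη n c m hm
  · apply ge_of_tendsto (htend (η (eulerAdic ⁻¹' cyl n c ∩ Xmaxᶜ)))
    filter_upwards [eventually_ge_atTop n] with m hm using cyl_le_nu hη n c m hm

lemma eta_Xmax_zero : η Xmax = 0 := by
  refine le_antisymm ?_ zero_le
  refine ge_of_tendsto tendsto_epsC (Eventually.of_forall fun m => ?_)
  have hsub : Xmax ⊆ {x : EulerPath | ∀ j < m, IsMaxEdge x j} := by
    intro x hx
    intro j _
    exact mem_Xmax_iff.mp hx j
  exact le_trans (measure_mono hsub) (eta_allmax_le hη m)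

end Meas2

/-- The Euler adic transformation is a bijection from `X \ X_max` onto `X \ X_min`, and
the symmetric measure `η` is invariant under it: for every Borel set `B`,
`η {x ∉ X_max : T x ∈ B} = η B`. -/
theorem euler_adic_bijective_and_measure_preserving
    (η : Measure EulerPath) (hη : IsSymmetricMeasure η) :
    Set.BijOn eulerAdic Xmaxᶜ Xminᶜ ∧
      ∀ B : Set EulerPath, MeasurableSet B →
        η {x | x ∉ Xmax ∧ eulerAdic x ∈ B} = η B := by
  obtain ⟨hprob, hcylm⟩ := hη
  have hpc : ∀ (n : ℕ) (c : EulerPath), η {x | ∀ i < n, x i = c i} = pC n := hcylm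
  refine ⟨T_bijOn, ?_⟩
  have hX0 : η Xmax = 0 := eta_Xmax_zero hpc
  have hXm : MeasurableSet Xmax := measurableSet_Xmax
  have hmap : (η.restrict Xmaxᶜ).map eulerAdic = η := by
    haveI hfinmap : IsFiniteMeasure ((η.restrict Xmaxᶜ).map eulerAdic) := by
      constructor
      rw [Measure.map_apply measurable_eulerAdic MeasurableSet.univ]
      exact measure_lt_top _ _
    apply ext_of_generate_finite _ generateFrom_cyl isPiSystem_cyl
    · rintro s ⟨n, c, rfl⟩
      rw [Measure.map_apply measurable_eulerAdic (measurableSet_cyl n c),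
        Measure.restrict_apply (measurable_eulerAdic (measurableSet_cyl n c))]
      exact nu_cyl_eq hpc n c
    · rw [Measure.map_apply measurable_eulerAdic MeasurableSet.univ, Set.preimage_univ,
        Measure.restrict_apply MeasurableSet.univ, Set.univ_inter,
        measure_compl hXm (measure_ne_top η _), hX0, tsub_zero]
  intro B hB
  have hset : {x | x ∉ Xmax ∧ eulerAdic x ∈ B} = eulerAdic ⁻¹' B ∩ Xmaxᶜ := by
    ext x
    simp only [Set.mem_setOf_eq, Set.mem_inter_iff, Set.mem_preimage, Set.mem_compl_iff]
    tauto
  rw [hset, ← Measure.restrict_apply (measurable_eulerAdic hB),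
    ← Measure.map_apply measurable_eulerAdic hB, hmap]
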